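/- Wilton's formula: for Re s > 1, Re a > 0, and complex b with |b| < |a|, the Hurwitz zeta function satisfies ζ(s, a+b) = ∑_{j=0}^∞ ((-b)^j / j!)·(s)_j·ζ(s+j, a). -/

import Mathlib

open Complex Filter Real


lemma aux_iteratedDeriv (s w : ℂ) (j : ℕ) :
    ∀ u : ℂ, w + u ∈ Complex.slitPlane →
      iteratedDeriv j (fun z => (w + z) ^ (-s)) u
        = (-1) ^ j * (ascPochhammer ℂ j).eval s * (w + u) ^ (-s - j) := by
  induction j with
  | zero => intro u hu; simp [iteratedDeriv_zero]
  | succ j ih =>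
    intro u hu
    have hopen : IsOpen {z : ℂ | w + z ∈ Complex.slitPlane} :=
      Complex.isOpen_slitPlane.preimage (by continuity)
    rw [iteratedDeriv_succ]
    have hev : iteratedDeriv j (fun z => (w + z) ^ (-s))
        =ᶠ[nhds u] fun z => (-1) ^ j * (ascPochhammer ℂ j).eval s * (w + z) ^ (-s - j) := by
      filter_upwards [hopen.mem_nhds hu] with z hz using ih z hz
    rw [hev.deriv_eq]
    have hd : HasDerivAt (fun z => (w + z) ^ (-s - j))
        ((-s - j) * (w + u) ^ (-s - j - 1) * 1) u :=
      HasDerivAt.cpow_const ((hasDerivAt_id u).const_add w) hu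
    rw [(hd.const_mul ((-1) ^ j * (ascPochhammer ℂ j).eval s)).deriv]
    rw [ascPochhammer_succ_right]
    have hexp : -s - (j : ℂ) - 1 = -s - ((j : ℕ) + 1 : ℕ) := by push_cast; ring
    rw [hexp] at *
    simp only [Polynomial.eval_mul, Polynomial.eval_add, Polynomial.eval_X,
      Polynomial.eval_natCast, pow_succ]
    ring

lemma aux_slit (w z : ℂ) (hw : 0 < w.re) (hz : ‖z‖ < ‖w‖) :
    w + z ∈ Complex.slitPlane := by
  rcases eq_or_ne ((w + z).im) 0 with h | h
  · left
    have h1 : z.im = -w.im := by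
      have := congrArg id h; simp only [Complex.add_im, id] at this; linarith
    have h2 : (‖z‖) ^ 2 = z.re ^ 2 + w.im ^ 2 := by
      rw [Complex.sq_norm, Complex.normSq_apply, h1]; ring
    have h3 : (‖w‖) ^ 2 = w.re ^ 2 + w.im ^ 2 := by
      rw [Complex.sq_norm, Complex.normSq_apply]; ring
    have h4 : (‖z‖) ^ 2 < (‖w‖) ^ 2 := by
      have := norm_nonneg z
      nlinarith
    have h5 : z.re ^ 2 < w.re ^ 2 := by nlinarith
    simp only [Complex.add_re]
    nlinarith [sq_nonneg (z.re + w.re), sq_nonneg (z.re - w.re)]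
  · right; exact h

lemma aux_hasSum_binom (s w b : ℂ) (hw : 0 < w.re) (hb : ‖b‖ < ‖w‖) :
    HasSum (fun j : ℕ => (-b) ^ j / j.factorial * (ascPochhammer ℂ j).eval s * w ^ (-s - j))
      ((w + b) ^ (-s)) := by
  set f : ℂ → ℂ := fun z => (w + z) ^ (-s) with hf
  have habsw : 0 < ‖w‖ := lt_of_le_of_lt (norm_nonneg b) hb
  set R : NNReal := ⟨(‖b‖ + ‖w‖) / 2, by positivity⟩ with hR
  have hbR : ‖b‖ < (R : ℝ) := by simp only [hR, NNReal.coe_mk]; show ‖b‖ < (‖b‖ + ‖w‖) / 2; linarith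
  have hRw : (R : ℝ) < ‖w‖ := by simp only [hR, NNReal.coe_mk]; show (‖b‖ + ‖w‖) / 2 < ‖w‖; linarith
  have hRpos : 0 < R := by
    rw [← NNReal.coe_pos]; exact lt_of_le_of_lt (norm_nonneg b) hbR
  have hslit : ∀ z : ℂ, ‖z‖ ≤ (R : ℝ) → w + z ∈ Complex.slitPlane := fun z hz =>
    aux_slit w z hw (lt_of_le_of_lt hz hRw)
  have hd : DifferentiableOn ℂ f (Metric.closedBall 0 R) := by
    intro z hz
    have hz' : ‖z‖ ≤ (R : ℝ) := by
      simpa [Complex.dist_eq] using Metric.mem_closedBall.1 hz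
    exact ((((hasDerivAt_id z).const_add w).cpow_const
      (hslit z hz')).differentiableAt).differentiableWithinAt
  have key := hd.hasFPowerSeriesOnBall hRpos
  have hmem : b ∈ EMetric.ball (0 : ℂ) (R : ENNReal) := by
    show edist b 0 < (R : ENNReal); rw [edist_zero_right, enorm_eq_nnnorm]
    exact_mod_cast hbR
  have hsum := key.hasSum_iteratedFDeriv hmem
  rw [zero_add] at hsum
  have hterm : ∀ j : ℕ, ((j.factorial : ℂ))⁻¹ • iteratedFDeriv ℂ j f 0 (fun _ => b)
      = (-b) ^ j / j.factorial * (ascPochhammer ℂ j).eval s * w ^ (-s - j) := by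
    intro j
    have h1 : (fun _ : Fin j => b) = fun _ : Fin j => b • (1 : ℂ) := by simp
    rw [h1, ContinuousMultilinearMap.map_smul_univ, ← iteratedDeriv_eq_iteratedFDeriv]
    have h0 : w + 0 ∈ Complex.slitPlane := by
      rw [add_zero]; exact Or.inl hw
    rw [aux_iteratedDeriv s w j 0 h0, add_zero]
    simp only [smul_eq_mul, Finset.prod_const, Finset.card_univ, Fintype.card_fin]
    ring
  rw [show (fun j : ℕ => ((j.factorial : ℂ))⁻¹ • iteratedFDeriv ℂ j f 0 (fun _ => b))
      = fun j : ℕ => (-b) ^ j / j.factorial * (ascPochhammer ℂ j).eval s * w ^ (-s - j)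
    from funext hterm] at hsum
  exact hsum


lemma aux_abs_le (a : ℂ) (ha : 0 ≤ a.re) (n : ℕ) :
    ‖a‖ ≤ ‖(n : ℂ) + a‖ := by
  have h1 : (‖a‖) ^ 2 ≤ (‖(n : ℂ) + a‖) ^ 2 := by
    rw [Complex.sq_norm, Complex.sq_norm, Complex.normSq_apply, Complex.normSq_apply]
    simp only [Complex.add_re, Complex.add_im, Complex.natCast_re, Complex.natCast_im]
    have : (0:ℝ) ≤ n := n.cast_nonneg
    nlinarith
  have := Real.sqrt_le_sqrt h1
  rwa [Real.sqrt_sq (norm_nonneg _), Real.sqrt_sq (norm_nonneg _)] at this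

lemma aux_norm_cpow (z c : ℂ) :
    ‖z ^ c‖ ≤ ‖z‖ ^ c.re * Real.exp (Real.pi * |c.im|) := by
  refine (Complex.norm_cpow_le z c).trans ?_
  rw [div_eq_mul_inv, ← Real.exp_neg]
  refine mul_le_mul_of_nonneg_left (Real.exp_le_exp.2 ?_) (Real.rpow_nonneg (norm_nonneg z) _)
  have h1 : |z.arg * c.im| ≤ Real.pi * |c.im| := by
    rw [abs_mul]
    exact mul_le_mul_of_nonneg_right (Complex.abs_arg_le_pi z) (abs_nonneg _)
  linarith [neg_abs_le (z.arg * c.im)]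

lemma aux_poch_nonneg (t : ℝ) (ht : 0 ≤ t) (j : ℕ) : 0 ≤ (ascPochhammer ℝ j).eval t := by
  induction j with
  | zero => simp
  | succ j ih =>
    rw [ascPochhammer_succ_right]
    simp only [Polynomial.eval_mul, Polynomial.eval_add, Polynomial.eval_X, Polynomial.eval_natCast]
    positivity

lemma aux_poch_bound (s : ℂ) (j : ℕ) :
    ‖(ascPochhammer ℂ j).eval s‖ ≤ (ascPochhammer ℝ j).eval (‖s‖) := by
  induction j with
  | zero => simp
  | succ j ih =>
    rw [ascPochhammer_succ_right, ascPochhammer_succ_right]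
    simp only [Polynomial.eval_mul, Polynomial.eval_add, Polynomial.eval_X, Polynomial.eval_natCast,
      norm_mul]
    refine mul_le_mul ih ?_ (norm_nonneg _) (aux_poch_nonneg _ (norm_nonneg s) j)
    refine (norm_add_le _ _).trans ?_
    simp

lemma aux_ratio (t r : ℝ) (ht : 0 < t) (hr0 : 0 ≤ r) (hr : r < 1) :
    Summable (fun j : ℕ => (ascPochhammer ℝ j).eval t * r ^ j / j.factorial) := by
  set r' : ℝ := (r + 1) / 2 with hr'
  have hr'1 : r' < 1 := by rw [hr']; linarith
  have hrr' : r < r' := by rw [hr']; linarith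
  have hr'0 : 0 < r' := by rw [hr']; linarith
  refine summable_of_ratio_norm_eventually_le hr'1 ?_
  have hN : ∀ᶠ j : ℕ in atTop, r * (t + j) ≤ r' * (j + 1) := by
    rcases eq_or_lt_of_le hr0 with h0 | h0
    · filter_upwards with j
      rw [← h0]
      have : (0:ℝ) ≤ (j:ℝ) + 1 := by positivity
      nlinarith
    · filter_upwards [eventually_ge_atTop (Nat.ceil ((r * t - r') / (r' - r)))] with j hj
      have h1 : ((r * t - r') / (r' - r)) ≤ (j : ℝ) :=
        le_trans (Nat.le_ceil _) (by exact_mod_cast hj)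
      have h2 : r * t - r' ≤ (j : ℝ) * (r' - r) := by
        rw [div_le_iff₀ (by linarith)] at h1; linarith
      nlinarith
  filter_upwards [hN] with j key
  have hp := aux_poch_nonneg t ht.le j
  have hfac : (0:ℝ) < (j.factorial : ℝ) := by exact_mod_cast j.factorial_pos
  have hjp : (0:ℝ) < (j:ℝ) + 1 := by positivity
  have e1 : Polynomial.eval t (ascPochhammer ℝ (j+1)) =
      Polynomial.eval t (ascPochhammer ℝ j) * (t + j) := by
    rw [ascPochhammer_succ_right]
    simp [Polynomial.eval_mul]
  have e2 : ((j+1).factorial : ℝ) = ((j:ℝ) + 1) * (j.factorial : ℝ) := by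
    rw [Nat.factorial_succ]; push_cast; ring
  rw [Real.norm_eq_abs, Real.norm_eq_abs, _root_.abs_of_nonneg
      (div_nonneg (mul_nonneg (aux_poch_nonneg t ht.le _) (pow_nonneg hr0 _)) (by positivity)),
    _root_.abs_of_nonneg
      (div_nonneg (mul_nonneg (aux_poch_nonneg t ht.le _) (pow_nonneg hr0 _)) (by positivity)),
    e1, e2, pow_succ]
  calc Polynomial.eval t (ascPochhammer ℝ j) * (t + ↑j) * (r ^ j * r) / (((j:ℝ)+1) * ↑j.factorial)
      = (Polynomial.eval t (ascPochhammer ℝ j) * r ^ j / ↑j.factorial) *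
          ((r * (t + ↑j)) / ((j:ℝ)+1)) := by
        field_simp
    _ ≤ (Polynomial.eval t (ascPochhammer ℝ j) * r ^ j / ↑j.factorial) * r' := by
        refine mul_le_mul_of_nonneg_left ?_ (by positivity)
        rw [div_le_iff₀ hjp]
        linarith
    _ = r' * (Polynomial.eval t (ascPochhammer ℝ j) * r ^ j / ↑j.factorial) := mul_comm _ _

lemma aux_v_summable (a : ℂ) (ha : 0 < a.re) (σ : ℝ) (hσ : 1 < σ) :
    Summable (fun n : ℕ => ‖(n : ℂ) + a‖ ^ (-σ)) := by
  rw [← summable_nat_add_iff 1]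
  have hcmp : ∀ n : ℕ, ‖(↑(n + 1) : ℂ) + a‖ ^ (-σ) ≤ ((n + 1 : ℕ) : ℝ) ^ (-σ) := by
    intro n
    have hpos : (0:ℝ) < ((n + 1 : ℕ) : ℝ) := by positivity
    have hle : ((n + 1 : ℕ) : ℝ) ≤ ‖(↑(n + 1) : ℂ) + a‖ := by
      refine le_trans ?_ (Complex.re_le_norm _)
      simp only [Complex.add_re, Complex.natCast_re]
      linarith
    exact Real.rpow_le_rpow_of_nonpos hpos hle (by linarith)
  refine Summable.of_nonneg_of_le (fun n => Real.rpow_nonneg (norm_nonneg _) _) hcmp ?_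
  have : Summable (fun n : ℕ => (n : ℝ) ^ (-σ)) := Real.summable_nat_rpow.2 (by linarith)
  exact_mod_cast (summable_nat_add_iff 1).2 this

/-- Hurwitz zeta function for `Re s > 1`, `Re a > 0`. -/
noncomputable def hurwitzZeta' (s a : ℂ) : ℂ := ∑' n : ℕ, ((n : ℂ) + a) ^ (-s)

set_option maxHeartbeats 1000000 in
theorem wilton_formula (s a b : ℂ) (hs : 1 < s.re) (ha : 0 < a.re)
    (hb : ‖b‖ < ‖a‖) :
    HasSum (fun j : ℕ => ((-b) ^ j / j.factorial) * (ascPochhammer ℂ j).eval s *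
        hurwitzZeta' (s + j) a)
      (hurwitzZeta' s (a + b)) := by
  set σ : ℝ := s.re with hσdef
  set E : ℝ := Real.exp (Real.pi * |s.im|) with hE
  have hEpos : 0 < E := Real.exp_pos _
  have habsa : 0 < ‖a‖ := lt_of_le_of_lt (norm_nonneg b) hb
  set r : ℝ := ‖b‖ / ‖a‖ with hrdef
  have hr0 : 0 ≤ r := div_nonneg (norm_nonneg b) habsa.le
  have hr1 : r < 1 := (div_lt_one habsa).2 hb
  have habss : 0 < ‖s‖ := by
    refine norm_pos_iff.2 fun h => ?_
    have : s.re = 0 := by rw [h]; simp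
    rw [hσdef] at hs; linarith
  set F : ℕ × ℕ → ℂ := fun p =>
    (-b) ^ p.1 / p.1.factorial * (ascPochhammer ℂ p.1).eval s
      * ((p.2 : ℂ) + a) ^ (-(s + p.1)) with hF
  have hwre : ∀ n : ℕ, 0 < ((n : ℂ) + a).re := by
    intro n
    simp only [Complex.add_re, Complex.natCast_re]
    have : (0:ℝ) ≤ n := n.cast_nonneg
    linarith
  have hwabs : ∀ n : ℕ, ‖a‖ ≤ ‖(n : ℂ) + a‖ := aux_abs_le a ha.le
  have hwpos : ∀ n : ℕ, 0 < ‖(n : ℂ) + a‖ := fun n =>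
    lt_of_lt_of_le habsa (hwabs n)
  -- the norm bound
  have hbound : ∀ p : ℕ × ℕ, ‖F p‖ ≤
      (E * ((ascPochhammer ℝ p.1).eval (‖s‖) * r ^ p.1 / p.1.factorial)) *
        (‖(p.2 : ℂ) + a‖ ^ (-σ)) := by
    rintro ⟨j, n⟩
    set w : ℂ := (n : ℂ) + a with hw
    have hA : 0 < ‖w‖ := hwpos n
    have hP : 0 ≤ (ascPochhammer ℝ j).eval (‖s‖) :=
      aux_poch_nonneg _ (norm_nonneg s) j
    have hnorm1 : ‖(-b) ^ j / (j.factorial : ℂ)‖ =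
        ‖b‖ ^ j / j.factorial := by
      rw [norm_div, norm_pow, Complex.norm_natCast, norm_neg]
    have hcpow : ‖w ^ (-(s + (j:ℂ)))‖ ≤
        ‖w‖ ^ (-(σ + (j:ℝ))) * E := by
      refine (aux_norm_cpow w (-(s + (j:ℂ)))).trans_eq ?_
      have e1 : (-(s + (j:ℂ))).re = -(σ + (j:ℝ)) := by simp [hσdef]
      have e2 : |(-(s + (j:ℂ))).im| = |s.im| := by simp
      rw [e1, e2]
    have hsplit : ‖w‖ ^ (-(σ + (j:ℝ))) =
        ‖w‖ ^ (-σ) * (‖w‖ ^ j)⁻¹ := by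
      have hj : ‖w‖ ^ (-(j:ℝ)) = (‖w‖ ^ j)⁻¹ := by
        rw [Real.rpow_neg hA.le, Real.rpow_natCast]
      rw [show -(σ + (j:ℝ)) = -σ + -(j:ℝ) by ring, Real.rpow_add hA, hj]
    have hinv : (‖w‖ ^ j)⁻¹ ≤ (‖a‖ ^ j)⁻¹ :=
      inv_anti₀ (by positivity) (pow_le_pow_left₀ habsa.le (hwabs n) j)
    calc ‖F (j, n)‖
        = ‖(-b) ^ j / (j.factorial : ℂ)‖ *
            ‖(ascPochhammer ℂ j).eval s‖ * ‖w ^ (-(s + (j:ℂ)))‖ := by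
          simp [hF, map_mul, hw]
      _ ≤ (‖b‖ ^ j / j.factorial) * (ascPochhammer ℝ j).eval (‖s‖) *
            (‖w‖ ^ (-(σ + (j:ℝ))) * E) := by
          refine mul_le_mul (mul_le_mul (le_of_eq hnorm1) (aux_poch_bound s j)
            (norm_nonneg _) (by positivity)) hcpow (norm_nonneg _) ?_
          positivity
      _ = ((ascPochhammer ℝ j).eval (‖s‖) / j.factorial * E *
            ‖w‖ ^ (-σ)) * (‖b‖ ^ j * (‖w‖ ^ j)⁻¹) := by
          rw [hsplit]; ring
      _ ≤ ((ascPochhammer ℝ j).eval (‖s‖) / j.factorial * E *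
            ‖w‖ ^ (-σ)) * (‖b‖ ^ j * (‖a‖ ^ j)⁻¹) := by
          refine mul_le_mul_of_nonneg_left
            (mul_le_mul_of_nonneg_left hinv (by positivity)) ?_
          have : (0:ℝ) ≤ ‖w‖ ^ (-σ) := Real.rpow_nonneg (norm_nonneg _) _
          positivity
      _ = (E * ((ascPochhammer ℝ j).eval (‖s‖) * r ^ j / j.factorial)) *
            (‖w‖ ^ (-σ)) := by
          rw [hrdef, div_pow]
          field_simp
  have hu : Summable (fun j : ℕ =>
      E * ((ascPochhammer ℝ j).eval (‖s‖) * r ^ j / j.factorial)) :=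
    (aux_ratio (‖s‖) r habss hr0 hr1).mul_left E
  have hv : Summable (fun n : ℕ => ‖(n : ℂ) + a‖ ^ (-σ)) :=
    aux_v_summable a ha σ hs
  have hG : Summable (fun p : ℕ × ℕ =>
      (E * ((ascPochhammer ℝ p.1).eval (‖s‖) * r ^ p.1 / p.1.factorial)) *
        (‖(p.2 : ℂ) + a‖ ^ (-σ))) := by
    refine hu.mul_of_nonneg hv (fun j => ?_) (fun n => Real.rpow_nonneg (norm_nonneg _) _)
    have := aux_poch_nonneg (‖s‖) (norm_nonneg s) j
    positivity
  have hFsum : Summable F := Summable.of_norm_bounded hG hbound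
  -- fiberwise over j
  have hzeta : ∀ j : ℕ, Summable (fun n : ℕ => ((n : ℂ) + a) ^ (-(s + (j:ℂ)))) := by
    intro j
    refine Summable.of_norm_bounded
      (g := fun n => ‖(n : ℂ) + a‖ ^ (-(σ + (j:ℝ))) * E) ?_ (fun n => ?_)
    · refine (aux_v_summable a ha (σ + j) ?_).mul_right E
      have : (0:ℝ) ≤ j := j.cast_nonneg
      linarith
    · refine (aux_norm_cpow _ _).trans_eq ?_
      have e1 : (-(s + (j:ℂ))).re = -(σ + (j:ℝ)) := by simp [hσdef]
      have e2 : |(-(s + (j:ℂ))).im| = |s.im| := by simp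
      rw [e1, e2]
  have hfib1 : ∀ j : ℕ, HasSum (fun n => F (j, n))
      ((-b) ^ j / j.factorial * (ascPochhammer ℂ j).eval s * hurwitzZeta' (s + j) a) := by
    intro j
    have hdef : hurwitzZeta' (s + (j:ℂ)) a = ∑' n : ℕ, ((n:ℂ) + a) ^ (-(s + (j:ℂ))) := rfl
    rw [hdef]
    exact ((hzeta j).hasSum).mul_left ((-b) ^ j / j.factorial * (ascPochhammer ℂ j).eval s)
  have h1 : HasSum (fun j : ℕ => (-b) ^ j / j.factorial * (ascPochhammer ℂ j).eval s *
      hurwitzZeta' (s + j) a) (∑' p, F p) := hFsum.hasSum.prod_fiberwise hfib1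
  -- fiberwise over n
  have hfib2 : ∀ n : ℕ, HasSum (fun j : ℕ => F ((n, j).swap)) ((((n : ℂ) + a) + b) ^ (-s)) := by
    intro n
    have h := aux_hasSum_binom s ((n : ℂ) + a) b (hwre n) (lt_of_lt_of_le hb (hwabs n))
    have heq : (fun j : ℕ => F ((n, j).swap)) = fun j : ℕ =>
        (-b) ^ j / j.factorial * (ascPochhammer ℂ j).eval s * ((n : ℂ) + a) ^ (-s - (j:ℂ)) := by
      funext j
      simp only [hF, Prod.swap_prod_mk]
      congr 1
      congr 1
      ring
    rw [heq]
    exact h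
  have hswap : HasSum (fun p : ℕ × ℕ => F p.swap) (∑' p : ℕ × ℕ, F p.swap) :=
    hFsum.prod_symm.hasSum
  have h2 : HasSum (fun n : ℕ => (((n : ℂ) + a) + b) ^ (-s)) (∑' p : ℕ × ℕ, F p.swap) :=
    hswap.prod_fiberwise fun n => hfib2 n
  have hkey : ∑' p : ℕ × ℕ, F p.swap = ∑' p, F p := (Equiv.prodComm ℕ ℕ).tsum_eq F
  have hT : hurwitzZeta' s (a + b) = ∑' p, F p := by
    rw [← hkey, ← h2.tsum_eq, hurwitzZeta']
    exact tsum_congr fun n => by rw [add_assoc]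
  rw [hT]
  exact h1
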